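/- Let S be a K-algebra with pseudo-degree function χ. If a ∈ N(S) satisfies χ(a) = m > 0 and C_S(a) satisfies condition D(1), then C_S(a) is a free K[a]-module with a finite basis whose cardinality divides m. -/

import Mathlib

set_option linter.unusedSectionVars false


/-- A pseudo-degree function on a (not necessarily associative) algebra `S`. -/
def IsPseudoDegree {S : Type*} [NonAssocRing S] (χ : S → WithBot ℤ) : Prop :=
  (∀ a : S, χ a = ⊥ ↔ a = 0) ∧
  (∀ a b : S, χ (a * b) = χ a + χ b) ∧
  (∀ a b : S, χ (a + b) ≤ max (χ a) (χ b))

/-- The nucleus of `S`. -/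
def nucleus (S : Type*) [NonAssocRing S] : Set S :=
  {a | (∀ b c : S, a * (b * c) = (a * b) * c) ∧
       (∀ b c : S, (b * a) * c = b * (a * c)) ∧
       (∀ b c : S, (b * c) * a = b * (c * a))}

/-- The centralizer of `a` in `S`. -/
def centralizer {S : Type*} [NonAssocRing S] (a : S) : Set S :=
  {b | a * b = b * a}

/-- Condition `D(ℓ)` for a subset `B` of `S` with respect to a pseudo-degree function
`χ`: every nonzero element of `B` has `χ`-value `≥ 0`, and whenever `ℓ + 1` elements
of `B` are all mapped to the same integer by `χ`, some nontrivial `K`-linear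
combination of them has strictly smaller `χ`-value. -/
def CondD (K : Type*) {S : Type*} [Field K] [NonAssocRing S] [Module K S]
    (χ : S → WithBot ℤ) (B : Set S) (ℓ : ℕ) : Prop :=
  (∀ b ∈ B, b ≠ 0 → 0 ≤ χ b) ∧
  ∀ (f : Fin (ℓ + 1) → S) (n : ℤ), (∀ i, f i ∈ B) →
    (∀ i, χ (f i) = (n : WithBot ℤ)) →
    ∃ c : Fin (ℓ + 1) → K, (∃ i, c i ≠ 0) ∧
      χ (∑ i, c i • f i) < (n : WithBot ℤ)

/-- Powers of an element of a non-associative unital ring. -/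
def apow {S : Type*} [NonAssocRing S] (a : S) : ℕ → S
  | 0 => 1
  | n + 1 => a * apow a n

/-- Evaluation of a polynomial `p ∈ K[x]` at an element `a` of a non-associative
`K`-algebra; for `a` in the nucleus this is the usual evaluation in `K[a]`. -/
noncomputable def evalAt {K S : Type*} [Field K] [NonAssocRing S] [Module K S]
    (a : S) (p : Polynomial K) : S :=
  p.sum fun i c => c • apow a i

section Aux
variable {S : Type*} [NonAssocRing S] (χ : S → WithBot ℤ)
  (hbot : ∀ a : S, χ a = ⊥ ↔ a = 0)
  (hmul : ∀ a b : S, χ (a * b) = χ a + χ b)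
  (haddle : ∀ a b : S, χ (a + b) ≤ max (χ a) (χ b))

include hbot hmul in
theorem chi_one (h1 : (1 : S) ≠ 0) : χ 1 = 0 := by
  have h := hmul 1 1
  rw [mul_one] at h
  have hb : χ 1 ≠ ⊥ := fun h' => h1 ((hbot 1).mp h')
  obtain ⟨n, hn⟩ := WithBot.ne_bot_iff_exists.mp hb
  rw [← hn] at h ⊢
  have : n = n + n := by exact_mod_cast h
  have : n = 0 := by omega
  simp [this]

include hbot hmul in
theorem chi_neg (h1 : (1 : S) ≠ 0) (x : S) : χ (-x) = χ x := by
  have hm1 : χ (-1 : S) = 0 := by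
    have h := hmul (-1) (-1)
    rw [neg_mul_neg, one_mul, chi_one χ hbot hmul h1] at h
    have hb : χ (-1 : S) ≠ ⊥ := by
      intro h'
      have : (-1 : S) = 0 := (hbot _).mp h'
      apply h1
      have := congrArg Neg.neg this
      simpa using this
    obtain ⟨n, hn⟩ := WithBot.ne_bot_iff_exists.mp hb
    rw [← hn] at h ⊢
    have : (0 : ℤ) = n + n := by exact_mod_cast h
    have : n = 0 := by omega
    simp [this]
  calc χ (-x) = χ ((-1) * x) := by rw [neg_one_mul]
    _ = χ x := by rw [hmul, hm1, zero_add]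

include hbot hmul haddle in
theorem chi_add_right (h1 : (1 : S) ≠ 0) {x y : S} (h : χ x < χ y) :
    χ (x + y) = χ y := by
  refine le_antisymm ((haddle x y).trans (by simp [le_of_lt h])) ?_
  by_contra hlt
  push_neg at hlt
  have hy : y = (x + y) + (-x) := by abel
  have h2 : χ y ≤ max (χ (x + y)) (χ x) := by
    calc χ y = χ ((x + y) + (-x)) := by rw [← hy]
      _ ≤ max (χ (x + y)) (χ (-x)) := haddle _ _
      _ = max (χ (x + y)) (χ x) := by rw [chi_neg χ hbot hmul h1]
  exact absurd h2 (not_le.mpr (max_lt hlt h))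

include hbot haddle in
theorem chi_sum_le {ι : Type*} (s : Finset ι) (f : ι → S) (N : WithBot ℤ)
    (h : ∀ i ∈ s, χ (f i) ≤ N) : χ (∑ i ∈ s, f i) ≤ N := by
  classical
  induction s using Finset.induction_on with
  | empty => simp [(hbot 0).mpr rfl]
  | insert _ _ hi ih =>
    rename_i i s
    rw [Finset.sum_insert hi]
    refine (haddle _ _).trans (max_le (h i (by simp)) (ih fun j hj => h j (by simp [hj])))

include hbot hmul haddle in
theorem chi_sum_eq_sup (h1 : (1 : S) ≠ 0) {ι : Type*} (s : Finset ι) (f : ι → S)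
    (hpw : ∀ i ∈ s, ∀ j ∈ s, i ≠ j → χ (f i) = χ (f j) → χ (f i) = ⊥) :
    χ (∑ i ∈ s, f i) = s.sup fun i => χ (f i) := by
  classical
  induction s using Finset.induction_on with
  | empty => simp [(hbot 0).mpr rfl]
  | insert _ _ hi ih =>
    rename_i i s
    have IH := ih fun x hx y hy hxy => hpw x (by simp [hx]) y (by simp [hy]) hxy
    rw [Finset.sum_insert hi, Finset.sup_insert]
    set M := s.sup fun i => χ (f i) with hM
    rcases lt_trichotomy (χ (f i)) M with hlt | heq | hgt
    · rw [← IH] at hlt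
      rw [chi_add_right χ hbot hmul haddle h1 hlt, IH]
      exact (max_eq_right (le_of_lt (IH ▸ hlt))).symm
    · rcases eq_or_ne M ⊥ with hMb | hMb
      · have hfi : f i = 0 := (hbot _).mp (heq.trans hMb)
        rw [hfi, zero_add, IH]
        rw [hfi] at heq
        rw [← heq]
        simp
      · have hsne : s.Nonempty := by
          by_contra hh
          rw [Finset.not_nonempty_iff_eq_empty] at hh
          rw [hh] at hM
          simp [hM] at hMb
        obtain ⟨j, hj, hjM⟩ := Finset.exists_mem_eq_sup s hsne fun i => χ (f i)
        have := hpw i (by simp) j (by simp [hj]) (by rintro rfl; exact hi hj)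
          (by rw [heq, hM, hjM])
        exact absurd (heq ▸ this) hMb
    · rw [add_comm, chi_add_right χ hbot hmul haddle h1 (IH ▸ hgt)]
      exact (max_eq_left (le_of_lt hgt)).symm

end Aux

section Aux2
variable {K S : Type*} [Field K] [NonAssocRing S] [Module K S]
  [SMulCommClass K S S] [IsScalarTower K S S]

theorem cent_one_mem (a : S) : (1 : S) ∈ centralizer a := by
  simp [centralizer]

theorem cent_self_mem (a : S) : a ∈ centralizer a := rfl

theorem cent_add_mem {a x y : S} (hx : x ∈ centralizer a) (hy : y ∈ centralizer a) :
    x + y ∈ centralizer a := by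
  simp only [centralizer, Set.mem_setOf_eq] at *
  rw [mul_add, add_mul, hx, hy]

theorem cent_smul_mem {a x : S} (γ : K) (hx : x ∈ centralizer a) :
    γ • x ∈ centralizer a := by
  simp only [centralizer, Set.mem_setOf_eq] at *
  rw [mul_smul_comm, smul_mul_assoc, hx]

theorem cent_mul_mem {a x y : S} (ha : a ∈ nucleus S) (hx : x ∈ centralizer a)
    (hy : y ∈ centralizer a) : x * y ∈ centralizer a := by
  simp only [centralizer, Set.mem_setOf_eq] at *
  obtain ⟨h1, h2, h3⟩ := ha
  rw [h1, hx, h2, hy, ← h3]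

theorem cent_apow_mem {a : S} (ha : a ∈ nucleus S) (n : ℕ) : apow a n ∈ centralizer a := by
  induction n with
  | zero => exact cent_one_mem a
  | succ n ih => exact cent_mul_mem ha (cent_self_mem a) ih

theorem cent_neg_mem {a x : S} (hx : x ∈ centralizer a) : -x ∈ centralizer a := by
  simp only [centralizer, Set.mem_setOf_eq] at *
  rw [mul_neg, neg_mul, hx]

theorem cent_sub_mem {a x y : S} (hx : x ∈ centralizer a) (hy : y ∈ centralizer a) :
    x - y ∈ centralizer a := by
  rw [sub_eq_add_neg]
  exact cent_add_mem hx (cent_neg_mem hy)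

variable (χ : S → WithBot ℤ)
  (hbot : ∀ a : S, χ a = ⊥ ↔ a = 0)
  (hmul : ∀ a b : S, χ (a * b) = χ a + χ b)

include hbot hmul in
theorem chi_smul {a : S} (hnn : ∀ b ∈ centralizer a, b ≠ 0 → 0 ≤ χ b)
    (h1 : (1 : S) ≠ 0) {γ : K} (hγ : γ ≠ 0) (x : S) : χ (γ • x) = χ x := by
  have hone : ∀ δ : K, δ ≠ 0 → χ (δ • (1 : S)) = 0 := by
    intro δ hδ
    have hne : ∀ ε : K, ε ≠ 0 → (ε • (1 : S)) ≠ 0 := by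
      intro ε hε h
      apply h1
      have := congrArg (fun z => ε⁻¹ • z) h
      simpa [smul_smul, inv_mul_cancel₀ hε] using this
    have hprod : (δ • (1 : S)) * (δ⁻¹ • (1 : S)) = 1 := by
      rw [smul_mul_assoc, one_mul, smul_smul, mul_inv_cancel₀ hδ, one_smul]
    have hsum : χ (δ • (1 : S)) + χ (δ⁻¹ • (1 : S)) = 0 := by
      rw [← hmul, hprod, chi_one χ hbot hmul h1]
    have hp1 : 0 ≤ χ (δ • (1 : S)) :=
      hnn _ (cent_smul_mem δ (cent_one_mem a)) (hne δ hδ)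
    have hp2 : 0 ≤ χ (δ⁻¹ • (1 : S)) :=
      hnn _ (cent_smul_mem δ⁻¹ (cent_one_mem a)) (hne δ⁻¹ (inv_ne_zero hδ))
    have hb1 : χ (δ • (1 : S)) ≠ ⊥ := fun h => (hne δ hδ) ((hbot _).mp h)
    have hb2 : χ (δ⁻¹ • (1 : S)) ≠ ⊥ := fun h => (hne δ⁻¹ (inv_ne_zero hδ)) ((hbot _).mp h)
    obtain ⟨n1, hn1⟩ := WithBot.ne_bot_iff_exists.mp hb1
    obtain ⟨n2, hn2⟩ := WithBot.ne_bot_iff_exists.mp hb2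
    rw [← hn1] at hp1
    rw [← hn2] at hp2
    rw [← hn1, ← hn2] at hsum
    rw [← hn1]
    have e1 : n1 + n2 = 0 := by exact_mod_cast hsum
    have e2 : 0 ≤ n1 := by exact_mod_cast hp1
    have e3 : 0 ≤ n2 := by exact_mod_cast hp2
    have h0 : n1 = 0 := by omega
    rw [h0]; rfl
  calc χ (γ • x) = χ ((γ • (1 : S)) * x) := by rw [smul_mul_assoc, one_mul]
    _ = χ x := by rw [hmul, hone γ hγ, zero_add]

include hbot hmul in
theorem chi_apow {a : S} {m : ℕ} (hm : χ a = (m : ℤ)) (n : ℕ) (h1 : (1 : S) ≠ 0) :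
    χ (apow a n) = ((n * m : ℕ) : ℤ) := by
  induction n with
  | zero => simpa [apow] using chi_one χ hbot hmul h1
  | succ n ih =>
    show χ (a * apow a n) = _
    rw [hmul, hm, ih]
    rw [← WithBot.coe_add]
    congr 1
    push_cast
    ring

theorem evalAt_zero (a : S) : evalAt (K := K) a 0 = 0 := by
  simp [evalAt]

theorem evalAt_add (a : S) (p q : Polynomial K) :
    evalAt a (p + q) = evalAt a p + evalAt a q := by
  unfold evalAt
  apply Polynomial.sum_add_index <;> intros <;> simp [add_smul]

theorem evalAt_monomial (a : S) (n : ℕ) (γ : K) :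
    evalAt a (Polynomial.monomial n γ) = γ • apow a n := by
  unfold evalAt
  rw [Polynomial.sum_monomial_index]
  simp

theorem evalAt_sub (a : S) (p q : Polynomial K) :
    evalAt a (p - q) = evalAt a p - evalAt a q := by
  have h : evalAt a (p - q) + evalAt a q = evalAt a p := by
    rw [← evalAt_add, sub_add_cancel]
  rw [← h]; abel

theorem evalAt_mem_centralizer {a : S} (ha : a ∈ nucleus S) (p : Polynomial K) :
    evalAt a p ∈ centralizer a := by
  unfold evalAt Polynomial.sum
  classical
  induction p.support using Finset.induction_on with
  | empty => simpa using cent_smul_mem (0 : K) (cent_one_mem a)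
  | insert _ _ hi ih =>
    rw [Finset.sum_insert hi]
    exact cent_add_mem (cent_smul_mem _ (cent_apow_mem ha _)) ih

variable (haddle : ∀ a b : S, χ (a + b) ≤ max (χ a) (χ b))

include hbot hmul haddle in
theorem chi_evalAt {a : S} {m : ℕ} (hm : χ a = (m : ℤ)) (hmpos : 0 < m)
    (hnn : ∀ b ∈ centralizer a, b ≠ 0 → 0 ≤ χ b) (h1 : (1 : S) ≠ 0)
    {p : Polynomial K} (hp : p ≠ 0) :
    χ (evalAt a p) = ((p.natDegree * m : ℕ) : ℤ) := by
  classical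
  have hterm : ∀ i ∈ p.support, χ (p.coeff i • apow a i) = ((i * m : ℕ) : ℤ) := by
    intro i hi
    rw [chi_smul χ hbot hmul hnn h1 (Polynomial.mem_support_iff.mp hi),
      chi_apow χ hbot hmul hm i h1]
  have hsum : χ (evalAt a p) =
      p.support.sup fun i => χ (p.coeff i • apow a i) := by
    apply chi_sum_eq_sup χ hbot hmul haddle h1
    intro i hi j hj hij hchi
    rw [hterm i hi, hterm j hj] at hchi
    have : i * m = j * m := by exact_mod_cast hchi
    exact absurd (Nat.eq_of_mul_eq_mul_right hmpos this) hij
  rw [hsum]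
  apply le_antisymm
  · apply Finset.sup_le
    intro i hi
    rw [hterm i hi]
    have : i ≤ p.natDegree := Polynomial.le_natDegree_of_mem_supp i hi
    exact_mod_cast Nat.mul_le_mul_right m this
  · have hd : p.natDegree ∈ p.support := Polynomial.natDegree_mem_support_of_nonzero hp
    calc ((p.natDegree * m : ℕ) : WithBot ℤ) = χ (p.coeff p.natDegree • apow a p.natDegree) :=
          (hterm _ hd).symm
      _ ≤ _ := Finset.le_sup (f := fun i => χ (p.coeff i • apow a i)) hd

include hbot hmul haddle in
theorem evalAt_ne_zero {a : S} {m : ℕ} (hm : χ a = (m : ℤ)) (hmpos : 0 < m)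
    (hnn : ∀ b ∈ centralizer a, b ≠ 0 → 0 ≤ χ b) (h1 : (1 : S) ≠ 0)
    {p : Polynomial K} (hp : p ≠ 0) : evalAt a p ≠ 0 := by
  intro h
  have := chi_evalAt χ hbot hmul haddle hm hmpos hnn h1 hp
  rw [h, (hbot 0).mpr rfl] at this
  exact absurd this.symm (WithBot.coe_ne_bot)

end Aux2

/-- Let `S` be a `K`-algebra with pseudo-degree function `χ`.  If `a` is in the nucleus
of `S` with `χ a = m > 0` and the centralizer `C_S(a)` satisfies condition `D(1)`,
then `C_S(a)` is a free left `K[a]`-module with a finite basis whose cardinality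
divides `m`. -/
theorem centralizer_free_basis_card_dvd {K S : Type*} [Field K] [NonAssocRing S]
    [Module K S] [SMulCommClass K S S] [IsScalarTower K S S]
    (χ : S → WithBot ℤ) (hχ : IsPseudoDegree χ)
    (a : S) (ha : a ∈ nucleus S) (m : ℕ) (hm : χ a = (m : ℤ)) (hmpos : 0 < m)
    (hD : CondD K χ (centralizer a) 1) :
    ∃ (k : ℕ), k ∣ m ∧ ∃ b : Fin k → S, (∀ i, b i ∈ centralizer a) ∧
      ∀ c ∈ centralizer a,
        ∃! φ : Fin k → Polynomial K, c = ∑ i, evalAt (a := a) (φ i) * b i := by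
  classical
  obtain ⟨hbot, hmul, haddle⟩ := hχ
  obtain ⟨hnn, hDD⟩ := hD
  have ha0 : a ≠ 0 := by
    intro h
    rw [h, (hbot 0).mpr rfl] at hm
    exact WithBot.bot_ne_coe hm
  have h1 : (1 : S) ≠ 0 := by
    intro h
    apply ha0
    calc a = a * 1 := (mul_one a).symm
      _ = a * 0 := by rw [h]
      _ = 0 := mul_zero a
  haveI : NeZero m := ⟨hmpos.ne'⟩
  have hdeg : ∀ c ∈ centralizer a, c ≠ 0 → ∃ n : ℕ, χ c = ((n : ℤ) : WithBot ℤ) := by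
    intro c hc hc0
    have h0 : 0 ≤ χ c := hnn c hc hc0
    have hbb : χ c ≠ ⊥ := fun h => hc0 ((hbot c).mp h)
    obtain ⟨z, hz⟩ := WithBot.ne_bot_iff_exists.mp hbb
    have hz0 : 0 ≤ z := by rw [← hz] at h0; exact_mod_cast h0
    obtain ⟨n, rfl⟩ := Int.eq_ofNat_of_zero_le hz0
    exact ⟨n, hz.symm⟩
  -- the set of residues of degrees
  set Tc : Set (ZMod m) := {r | ∃ n : ℕ,
    (∃ c ∈ centralizer a, c ≠ 0 ∧ χ c = ((n : ℤ) : WithBot ℤ)) ∧ (n : ZMod m) = r} with hTc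
  have hT0 : (0 : ZMod m) ∈ Tc := by
    refine ⟨0, ⟨1, cent_one_mem a, h1, ?_⟩, by simp⟩
    rw [chi_one χ hbot hmul h1]; norm_cast
  have hTadd : ∀ r s, r ∈ Tc → s ∈ Tc → r + s ∈ Tc := by
    rintro r s ⟨n1, ⟨c1, hc1, hc10, hχ1⟩, rfl⟩ ⟨n2, ⟨c2, hc2, hc20, hχ2⟩, rfl⟩
    refine ⟨n1 + n2, ⟨c1 * c2, cent_mul_mem ha hc1 hc2, ?_, ?_⟩, by push_cast; ring⟩
    · intro h
      have := (hbot _).mpr h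
      rw [hmul, hχ1, hχ2, ← WithBot.coe_add] at this
      exact WithBot.coe_ne_bot this
    · rw [hmul, hχ1, hχ2, ← WithBot.coe_add]
      norm_cast
  have hTnsmul : ∀ (l : ℕ) (r), r ∈ Tc → l • r ∈ Tc := by
    intro l
    induction l with
    | zero => intro r _; simpa using hT0
    | succ l ih =>
      intro r hr
      rw [succ_nsmul]
      exact hTadd _ _ (ih r hr) hr
  have hTneg : ∀ r, r ∈ Tc → -r ∈ Tc := by
    intro r hr
    have h' : (m - 1) • r ∈ Tc := hTnsmul (m - 1) r hr
    have hm1 : (m - 1 : ℕ) + 1 = m := by omega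
    have hm0 : (m : ℕ) • r = (0 : ZMod m) := by
      rw [nsmul_eq_mul, ZMod.natCast_self, zero_mul]
    have h2 : (m - 1) • r + r = 0 := by
      rw [← succ_nsmul, hm1, hm0]
    have h3 : (m - 1) • r = -r := eq_neg_of_add_eq_zero_left h2
    rwa [h3] at h'
  let T : AddSubgroup (ZMod m) :=
    { carrier := Tc
      zero_mem' := hT0
      add_mem' := fun h h' => hTadd _ _ h h'
      neg_mem' := fun h => hTneg _ h }
  haveI : Fintype T := Fintype.ofFinite T
  set k := Fintype.card T with hk
  have hkdvd : k ∣ m := by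
    have h := AddSubgroup.card_addSubgroup_dvd_card T
    rwa [Nat.card_zmod, Nat.card_eq_fintype_card] at h
  let e : T ≃ Fin k := Fintype.equivFin T
  -- minimal degree in each residue class
  set Dset : T → Set ℕ := fun r => {n : ℕ |
    (∃ c ∈ centralizer a, c ≠ 0 ∧ χ c = ((n : ℤ) : WithBot ℤ)) ∧ (n : ZMod m) = (r : ZMod m)}
    with hDset
  have hDne : ∀ r : T, (Dset r).Nonempty := by
    rintro ⟨r, n, hn, hr⟩
    exact ⟨n, hn, hr⟩
  set d : T → ℕ := fun r => sInf (Dset r) with hd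
  have hdmem : ∀ r : T, d r ∈ Dset r := fun r => Nat.sInf_mem (hDne r)
  have hdmin : ∀ r : T, ∀ n ∈ Dset r, d r ≤ n := fun r n hn => Nat.sInf_le hn
  have hbex : ∀ r : T, ∃ c, c ∈ centralizer a ∧ c ≠ 0 ∧
      χ c = ((d r : ℤ) : WithBot ℤ) ∧ ((d r : ZMod m) = (r : ZMod m)) := by
    intro r
    obtain ⟨⟨c, hc, hc0, hχc⟩, hres⟩ := hdmem r
    exact ⟨c, hc, hc0, hχc, hres⟩
  choose b0 hb0mem hb0ne hb0χ hb0res using hbex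
  set b : Fin k → S := fun i => b0 (e.symm i) with hb
  -- uniqueness of representations
  have uniq : ∀ φ : Fin k → Polynomial K,
      (∑ i, evalAt (a := a) (φ i) * b i) = 0 → ∀ i, φ i = 0 := by
    intro φ hsum0
    set f : Fin k → S := fun i => evalAt (a := a) (φ i) * b i with hf
    have hval : ∀ i, φ i ≠ 0 → χ (f i) =
        ((((φ i).natDegree * m + d (e.symm i) : ℕ) : ℤ) : WithBot ℤ) := by
      intro i hφi
      show χ (evalAt (a := a) (φ i) * b0 (e.symm i)) = _
      rw [hmul, chi_evalAt χ hbot hmul haddle hm hmpos hnn h1 hφi, hb0χ (e.symm i),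
        ← WithBot.coe_add]
      norm_cast
    have hfz : ∀ i, φ i = 0 → f i = 0 := by
      intro i hφi
      show evalAt (a := a) (φ i) * b i = 0
      rw [hφi, evalAt_zero, zero_mul]
    have hpw : ∀ i ∈ Finset.univ, ∀ j ∈ Finset.univ, i ≠ j →
        χ (f i) = χ (f j) → χ (f i) = ⊥ := by
      intro i _ j _ hij hchi
      by_cases hφi : φ i = 0
      · rw [hfz i hφi, (hbot 0).mpr rfl]
      by_cases hφj : φ j = 0
      · rw [hfz j hφj, (hbot 0).mpr rfl] at hchi
        rw [hval i hφi] at hchi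
        exact absurd hchi WithBot.coe_ne_bot
      exfalso
      rw [hval i hφi, hval j hφj] at hchi
      have hnat : (φ i).natDegree * m + d (e.symm i)
          = (φ j).natDegree * m + d (e.symm j) := by exact_mod_cast hchi
      have hres : ((d (e.symm i) : ZMod m)) = ((d (e.symm j) : ZMod m)) := by
        have := congrArg (fun n : ℕ => (n : ZMod m)) hnat
        simpa [ZMod.natCast_self] using this
      rw [hb0res (e.symm i), hb0res (e.symm j)] at hres
      exact hij (e.symm.injective (Subtype.ext hres) ▸ rfl)
    intro i
    by_contra hφi
    have hsup := chi_sum_eq_sup χ hbot hmul haddle h1 Finset.univ f hpw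
    rw [hsum0, (hbot 0).mpr rfl] at hsup
    have hle : χ (f i) ≤ ⊥ := hsup ▸ Finset.le_sup (f := fun i => χ (f i)) (Finset.mem_univ i)
    rw [hval i hφi] at hle
    exact absurd (le_bot_iff.mp hle) WithBot.coe_ne_bot
  -- spanning by strong induction on degree
  have span : ∀ N : ℕ, ∀ c, c ∈ centralizer a → χ c ≤ ((N : ℤ) : WithBot ℤ) →
      ∃ φ : Fin k → Polynomial K, c = ∑ i, evalAt (a := a) (φ i) * b i := by
    intro N
    induction N using Nat.strong_induction_on with
    | _ N IH =>
    intro c hc hcN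
    by_cases hc0 : c = 0
    · refine ⟨0, ?_⟩
      simp [hc0, evalAt_zero]
    obtain ⟨d', hd'⟩ := hdeg c hc hc0
    have hd'N : d' ≤ N := by
      rw [hd'] at hcN
      exact_mod_cast hcN
    have hrT : (d' : ZMod m) ∈ Tc := ⟨d', ⟨c, hc, hc0, hd'⟩, rfl⟩
    set r : T := ⟨(d' : ZMod m), hrT⟩ with hr
    set i0 : Fin k := e r with hi0
    have hesymm : e.symm i0 = r := e.symm_apply_apply r
    have hd'Dset : d' ∈ Dset r := ⟨⟨c, hc, hc0, hd'⟩, rfl⟩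
    have hdr : d r ≤ d' := hdmin r d' hd'Dset
    have hcong : d r ≡ d' [MOD m] := by
      have := hb0res r
      rw [hr] at this
      exact (ZMod.natCast_eq_natCast_iff _ _ _).mp this
    obtain ⟨j, hj⟩ := (Nat.modEq_iff_dvd' hdr).mp hcong
    have hd'eq : d' = d r + m * j := by omega
    set y : S := apow a j * b0 r with hy
    have hymem : y ∈ centralizer a := cent_mul_mem ha (cent_apow_mem ha j) (hb0mem r)
    have hyχ : χ y = ((d' : ℤ) : WithBot ℤ) := by
      rw [hy, hmul, chi_apow χ hbot hmul hm j h1, hb0χ r, ← WithBot.coe_add]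
      norm_cast
      rw [hd'eq]; ring
    obtain ⟨cf, ⟨iw, hiw⟩, hlt⟩ := hDD ![c, y] (d' : ℤ)
      (by intro i; fin_cases i <;> simpa using (by first | exact hc | exact hymem))
      (by intro i; fin_cases i <;> simp [hd', hyχ])
    rw [Fin.sum_univ_two] at hlt
    simp only [Matrix.cons_val_zero, Matrix.cons_val_one, Matrix.head_cons] at hlt
    have hcf0 : cf 0 ≠ 0 := by
      intro h0
      have hcf1 : cf 1 ≠ 0 := by
        fin_cases iw
        · exact absurd h0 hiw
        · exact hiw
      rw [h0, zero_smul, zero_add,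
        chi_smul χ hbot hmul hnn h1 hcf1 y, hyχ] at hlt
      exact lt_irrefl _ hlt
    have hcf1 : cf 1 ≠ 0 := by
      intro h0
      rw [h0, zero_smul, add_zero,
        chi_smul χ hbot hmul hnn h1 hcf0 c, hd'] at hlt
      exact lt_irrefl _ hlt
    set z : S := cf 0 • c + cf 1 • y with hz
    have hzmem : z ∈ centralizer a :=
      cent_add_mem (cent_smul_mem _ hc) (cent_smul_mem _ hymem)
    set c' : S := (cf 0)⁻¹ • z with hc'
    have hc'mem : c' ∈ centralizer a := cent_smul_mem _ hzmem
    have hc'χ : χ c' < ((d' : ℤ) : WithBot ℤ) := by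
      rw [hc', chi_smul χ hbot hmul hnn h1 (inv_ne_zero hcf0) z]
      exact hlt
    set γ : K := -((cf 0)⁻¹ * cf 1) with hγ
    have hceq : c = c' + γ • y := by
      rw [hc', hz, smul_add, smul_smul, inv_mul_cancel₀ hcf0, one_smul, smul_smul, hγ]
      module
    set ψ : Fin k → Polynomial K := Pi.single i0 (Polynomial.monomial j γ) with hψ
    have hψsum : (∑ i, evalAt (a := a) (ψ i) * b i) = γ • y := by
      rw [Finset.sum_eq_single i0]
      · rw [hψ, Pi.single_eq_same, evalAt_monomial]
        show (γ • apow a j) * b0 (e.symm i0) = γ • y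
        rw [hesymm, hy, smul_mul_assoc]
      · intro i _ hii
        rw [hψ, Pi.single_eq_of_ne hii, evalAt_zero, zero_mul]
      · intro h
        exact absurd (Finset.mem_univ i0) h
    by_cases hc'0 : c' = 0
    · refine ⟨ψ, ?_⟩
      rw [hψsum, hceq, hc'0, zero_add]
    · obtain ⟨eN, heN⟩ := hdeg c' hc'mem hc'0
      have heNd' : eN < d' := by
        rw [heN] at hc'χ
        exact_mod_cast hc'χ
      obtain ⟨φ', hφ'⟩ := IH eN (lt_of_lt_of_le heNd' hd'N) c' hc'mem (le_of_eq heN)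
      refine ⟨φ' + ψ, ?_⟩
      have : (∑ i, evalAt (a := a) ((φ' + ψ) i) * b i)
          = (∑ i, evalAt (a := a) (φ' i) * b i) + (∑ i, evalAt (a := a) (ψ i) * b i) := by
        rw [← Finset.sum_add_distrib]
        congr 1
        funext i
        rw [Pi.add_apply, evalAt_add, add_mul]
      rw [this, ← hφ', hψsum, hceq]
  -- assemble
  refine ⟨k, hkdvd, b, fun i => hb0mem _, fun c hc => ?_⟩
  have hex : ∃ φ : Fin k → Polynomial K, c = ∑ i, evalAt (a := a) (φ i) * b i := by
    by_cases hc0 : c = 0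
    · exact span 0 c hc (by rw [(hbot c).mpr hc0]; exact bot_le)
    · obtain ⟨n, hn⟩ := hdeg c hc hc0
      exact span n c hc (le_of_eq hn)
  obtain ⟨φ, hφ⟩ := hex
  refine ⟨φ, hφ, ?_⟩
  intro ψ' hψ'
  funext i
  have hdiff : (∑ i, evalAt (a := a) ((ψ' - φ) i) * b i) = 0 := by
    have : (∑ i, evalAt (a := a) ((ψ' - φ) i) * b i)
        = (∑ i, evalAt (a := a) (ψ' i) * b i) - (∑ i, evalAt (a := a) (φ i) * b i) := by
      rw [← Finset.sum_sub_distrib]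
      congr 1
      funext i
      rw [Pi.sub_apply, evalAt_sub, sub_mul]
    rw [this, ← hψ', ← hφ, sub_self]
  have := uniq (ψ' - φ) hdiff i
  rw [Pi.sub_apply] at this
  exact sub_eq_zero.mp this
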